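/- Let $R$ be a commutative Noetherian local ring and $0 \to M_q \to M_{q-1} \to \cdots \to M_0$ a complex of finitely generated $R$-modules such that $\mathrm{depth}\, M_j \ge j$ for all $j$. If $i > 0$ is the largest index at which the homology $H_i$ is nonzero, then $\mathrm{depth}\, H_i \ge 1$; equivalently, if every nonzero positive-degree homology module has depth $0$, the complex is exact in positive degrees. -/

import Mathlib

set_option linter.unusedSectionVars false

open CategoryTheory Opposite

noncomputable section

/-- `Ext_R^k(M, N)` for modules over a commutative ring `R`, as a type
(carrying its natural `R`-module structure from the `R`-linear `Ext` functor). -/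
abbrev CExt (R : Type) [CommRing R] (k : ℕ) (M N : Type) [AddCommGroup M] [Module R M]
    [AddCommGroup N] [Module R N] : Type :=
  ((Ext R (ModuleCat.{0} R) k).obj (op (ModuleCat.of R M))).obj (ModuleCat.of R N)

/-- `pdim M ≤ d`, characterized by vanishing of `Ext^k(M, N)` for all `k > d` and all `N`. -/
def CPdimLE (R : Type) [CommRing R] (M : Type) [AddCommGroup M] [Module R M] (d : ℕ) : Prop :=
  ∀ k, d < k → ∀ (N : Type) [AddCommGroup N] [Module R N], Subsingleton (CExt R k M N)

/-- The grade `j(M)`: the least `k` with `Ext_R^k(M, R) ≠ 0`. -/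
def cGrade (R : Type) [CommRing R] (M : Type) [AddCommGroup M] [Module R M] : ℕ :=
  sInf {k | Nontrivial (CExt R k M R)}

/-- Homology of a complex `⋯ → M (q+2) → M (q+1) → M q → ⋯` at slot `q + 1`:
`ker (d q) / im (d (q+1))`. (So the paper's `H_i`, `i ≥ 1`, is `Hml d (i - 1)`.) -/
abbrev Hml {R : Type} [CommRing R] {M : ℕ → Type} [∀ q, AddCommGroup (M q)]
    [∀ q, Module R (M q)] (d : ∀ q, M (q + 1) →ₗ[R] M q) (q : ℕ) : Type :=
  ↥(LinearMap.ker (d q)) ⧸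
    Submodule.comap (LinearMap.ker (d q)).subtype (LinearMap.range (d (q + 1)))

/-- The depth of `M` over a Noetherian local ring, characterized homologically as the least
`k` with `Ext_R^k(R/𝔪, M) ≠ 0` (with depth of the zero module equal to `⊤`). -/
def depthE (R : Type) [CommRing R] [IsLocalRing R] (M : Type) [AddCommGroup M]
    [Module R M] : ℕ∞ :=
  sInf {k : ℕ∞ | ∃ n : ℕ, k = (n : ℕ∞) ∧ Nontrivial (CExt R n (IsLocalRing.ResidueField R) M)}

namespace AcyclicityAux

variable {R : Type} [CommRing R] [IsLocalRing R]

/-- The residue field as an object of `ModuleCat R`. -/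
abbrev kk (R : Type) [CommRing R] [IsLocalRing R] : ModuleCat.{0} R :=
  ModuleCat.of R (IsLocalRing.ResidueField R)

variable (P : ProjectiveResolution (kk R))

/-- The complex `Hom(P, N)`. -/
abbrev hcx (N : ModuleCat.{0} R) : CochainComplex (ModuleCat.{0} R) ℕ :=
  P.complex.linearYonedaObj R N

lemma subsingleton_of_mono {X Y : ModuleCat.{0} R} (f : X ⟶ Y) [Mono f]
    (h : Subsingleton Y) : Subsingleton X := by
  have hf := (ModuleCat.mono_iff_injective f).mp inferInstance
  exact ⟨fun a b => hf (h.elim _ _)⟩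

lemma subsingleton_of_epi {X Y : ModuleCat.{0} R} (f : X ⟶ Y) [Epi f]
    (h : Subsingleton X) : Subsingleton Y := by
  have hf := (ModuleCat.epi_iff_surjective f).mp inferInstance
  refine ⟨fun a b => ?_⟩
  obtain ⟨a', rfl⟩ := hf a
  obtain ⟨b', rfl⟩ := hf b
  rw [h.elim a' b']

lemma subsingleton_X₂ (S : ShortComplex (ModuleCat.{0} R)) (hS : S.Exact)
    (h1 : Subsingleton S.X₁) (h3 : Subsingleton S.X₃) : Subsingleton S.X₂ := by
  have key : ∀ x : S.X₂, x = 0 := by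
    intro x
    obtain ⟨x₁, hx₁⟩ := (S.moduleCat_exact_iff.mp hS) x (h3.elim _ _)
    rw [← hx₁, h1.elim x₁ 0, map_zero]
  exact ⟨fun a b => by rw [key a, key b]⟩

/-- The chain map `Hom(P, Y) ⟶ Hom(P, Y')` induced by `φ : Y ⟶ Y'`. -/
def hcxMap {Y Y' : ModuleCat.{0} R} (φ : Y ⟶ Y') : hcx P Y ⟶ hcx P Y' where
  f n := ModuleCat.ofHom (Linear.rightComp R _ φ)
  comm' i j _ := by
    ext (x : _ ⟶ _)
    dsimp [ChainComplex.linearYonedaObj, ModuleCat.ofHom, Linear.leftComp, Linear.rightComp]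
    exact (Category.assoc (P.complex.d j i) x φ).symm

lemma hcxMap_f_apply {Y Y' : ModuleCat.{0} R} (φ : Y ⟶ Y') (n : ℕ)
    (x : (hcx P Y).X n) : (hcxMap P φ).f n x = (x : P.complex.X n ⟶ Y) ≫ φ := rfl

lemma hcxMap_id {Y : ModuleCat.{0} R} : hcxMap P (𝟙 Y) = 𝟙 (hcx P Y) := by
  apply HomologicalComplex.hom_ext
  intro n
  ext (x : _ ⟶ _)
  exact Category.comp_id x

lemma hcxMap_comp {Y Y' Y'' : ModuleCat.{0} R} (φ : Y ⟶ Y') (ψ : Y' ⟶ Y'') :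
    hcxMap P (φ ≫ ψ) = hcxMap P φ ≫ hcxMap P ψ := by
  apply HomologicalComplex.hom_ext
  intro n
  ext (x : _ ⟶ _)
  exact (Category.assoc x φ ψ).symm

lemma hcxMap_zero {Y Y' : ModuleCat.{0} R} : hcxMap P (0 : Y ⟶ Y') = 0 := by
  apply HomologicalComplex.hom_ext
  intro n
  ext (x : _ ⟶ _)
  show x ≫ (0 : Y ⟶ Y') = 0
  simp

/-- The iso of hom complexes induced by an iso of modules. -/
def hcxIso {Y Y' : ModuleCat.{0} R} (e : Y ≅ Y') : hcx P Y ≅ hcx P Y' where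
  hom := hcxMap P e.hom
  inv := hcxMap P e.inv
  hom_inv_id := by rw [← hcxMap_comp, e.hom_inv_id, hcxMap_id]
  inv_hom_id := by rw [← hcxMap_comp, e.inv_hom_id, hcxMap_id]

/-- Vanishing of `Ext^n(k, N)` expressed through the hom complex. -/
def Vh (n : ℕ) (N : ModuleCat.{0} R) : Prop := Subsingleton ((hcx P N).homology n)

lemma vh_of_subsingleton (N : ModuleCat.{0} R) (hN : Subsingleton N) (n : ℕ) :
    Vh P n N := by
  have hX : Subsingleton ((hcx P N).X n) := by
    refine ⟨fun a b => ?_⟩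
    have : ∀ (u v : P.complex.X n ⟶ N), u = v := fun u v => by
      ext z
      exact hN.elim _ _
    exact this a b
  have h1 : Subsingleton ((hcx P N).cycles n) :=
    subsingleton_of_mono ((hcx P N).iCycles n) hX
  exact subsingleton_of_epi ((hcx P N).homologyπ n) h1

lemma vh_of_iso {Y Y' : ModuleCat.{0} R} (e : Y ≅ Y') (n : ℕ) (h : Vh P n Y) :
    Vh P n Y' := by
  have e' := (HomologicalComplex.homologyFunctor (ModuleCat.{0} R) _ n).mapIso (hcxIso P e)
  haveI : Mono e'.inv := IsIso.mono_of_iso _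
  exact @subsingleton_of_mono _ _ _ _ _ e'.inv this h

/-- The short complex of hom complexes induced by a short complex of modules. -/
def hcxSC (S : ShortComplex (ModuleCat.{0} R)) :
    ShortComplex (CochainComplex (ModuleCat.{0} R) ℕ) :=
  ShortComplex.mk (hcxMap P S.f) (hcxMap P S.g)
    (by rw [← hcxMap_comp, S.zero, hcxMap_zero])

lemma hcxSC_shortExact {S : ShortComplex (ModuleCat.{0} R)} (hS : S.ShortExact) :
    (hcxSC P S).ShortExact := by
  haveI := hS.mono_f
  haveI := hS.epi_g
  apply HomologicalComplex.shortExact_of_degreewise_shortExact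
  intro n
  haveI : Projective (P.complex.X n) := P.projective n
  refine { exact := ?_, mono_f := ?_, epi_g := ?_ }
  · rw [ShortComplex.moduleCat_exact_iff]
    intro x hx
    have hx' : (x : P.complex.X n ⟶ S.X₂) ≫ S.g = 0 := hx
    exact ⟨hS.exact.lift x hx', hS.exact.lift_f x hx'⟩
  · rw [ModuleCat.mono_iff_injective]
    intro x y hxy
    exact (cancel_mono S.f).mp hxy
  · rw [ModuleCat.epi_iff_surjective]
    intro y
    exact ⟨Projective.factorThru y S.g, Projective.factorThru_comp y S.g⟩

lemma vh_X₃ {S : ShortComplex (ModuleCat.{0} R)} (hS : S.ShortExact) (n : ℕ)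
    (h2 : Vh P n S.X₂) (h1 : Vh P (n + 1) S.X₁) : Vh P n S.X₃ :=
  subsingleton_X₂ _ ((hcxSC_shortExact P hS).homology_exact₃ n (n + 1) rfl) h2 h1

lemma vh_X₁ {S : ShortComplex (ModuleCat.{0} R)} (hS : S.ShortExact) (n : ℕ)
    (h3 : Vh P n S.X₃) (h2 : Vh P (n + 1) S.X₂) : Vh P (n + 1) S.X₁ :=
  subsingleton_X₂ _ ((hcxSC_shortExact P hS).homology_exact₁ n (n + 1) rfl) h3 h2

lemma vh_zero_of_mono {Y Y' : ModuleCat.{0} R} (φ : Y ⟶ Y') [Mono φ]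
    (h : Vh P 0 Y') : Vh P 0 Y := by
  have h1 : Subsingleton ((hcx P Y').cycles 0) := by
    have e := (hcx P Y').isoHomologyπ 0 0 (by simp) ((hcx P Y').shape 0 0 (by simp))
    haveI : Mono e.hom := IsIso.mono_of_iso _
    exact subsingleton_of_mono e.hom h
  have hf0 : Mono ((hcxMap P φ).f 0) := by
    rw [ModuleCat.mono_iff_injective]
    intro x y hxy
    exact (cancel_mono φ).mp hxy
  have hcomp : Mono (HomologicalComplex.cyclesMap (hcxMap P φ) 0 ≫ (hcx P Y').iCycles 0) := by
    rw [HomologicalComplex.cyclesMap_i]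
    exact mono_comp _ _
  haveI : Mono (HomologicalComplex.cyclesMap (hcxMap P φ) 0) :=
    mono_of_mono (HomologicalComplex.cyclesMap (hcxMap P φ) 0) ((hcx P Y').iCycles 0)
  have h2 : Subsingleton ((hcx P Y).cycles 0) :=
    subsingleton_of_mono (HomologicalComplex.cyclesMap (hcxMap P φ) 0) h1
  exact subsingleton_of_epi ((hcx P Y).homologyπ 0) h2

lemma vh_iff_cext (n : ℕ) (N : Type) [AddCommGroup N] [Module R N] :
    Subsingleton (CExt R n (IsLocalRing.ResidueField R) N) ↔ Vh P n (ModuleCat.of R N) := by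
  have e := P.isoExt (R := R) n (ModuleCat.of R N)
  constructor
  · intro h
    haveI : Mono e.inv := IsIso.mono_of_iso _
    exact subsingleton_of_mono e.inv h
  · intro h
    haveI : Mono e.hom := IsIso.mono_of_iso _
    exact subsingleton_of_mono e.hom h

section TypeLevel

variable {A B C : Type} [AddCommGroup A] [Module R A] [AddCommGroup B] [Module R B]
  [AddCommGroup C] [Module R C]

/-- Vanishing of `Ext^n(k, N)` at the type level. -/
abbrev Vt (P : ProjectiveResolution (kk R)) (n : ℕ) (N : Type) [AddCommGroup N] [Module R N] :
    Prop :=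
  Vh P n (ModuleCat.of R N)

lemma ses_shortExact (f : A →ₗ[R] B) (g : B →ₗ[R] C) (hf : Function.Injective f)
    (hg : Function.Surjective g) (hfg : LinearMap.range f = LinearMap.ker g)
    (h0 : g.comp f = 0) :
    (ShortComplex.moduleCatMk f g h0).ShortExact := by
  refine { exact := ?_, mono_f := ?_, epi_g := ?_ }
  · rw [ShortComplex.moduleCat_exact_iff_range_eq_ker]
    exact hfg
  · rw [ModuleCat.mono_iff_injective]
    exact hf
  · rw [ModuleCat.epi_iff_surjective]
    exact hg

lemma Vt_X₃ (f : A →ₗ[R] B) (g : B →ₗ[R] C) (hf : Function.Injective f)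
    (hg : Function.Surjective g) (hfg : LinearMap.range f = LinearMap.ker g)
    (h0 : g.comp f = 0) (n : ℕ) (h2 : Vt P n B) (h1 : Vt P (n + 1) A) : Vt P n C :=
  vh_X₃ P (ses_shortExact f g hf hg hfg h0) n h2 h1

lemma Vt_zero_of_injective (f : A →ₗ[R] B) (hf : Function.Injective f)
    (h : Vt P 0 B) : Vt P 0 A := by
  haveI : Mono (ModuleCat.ofHom f) := (ModuleCat.mono_iff_injective _).mpr hf
  exact vh_zero_of_mono P (ModuleCat.ofHom f) h

lemma Vt_of_equiv (e : A ≃ₗ[R] B) (n : ℕ) (h : Vt P n A) : Vt P n B :=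
  vh_of_iso P e.toModuleIso n h

lemma Vt_of_subsingleton (hA : Subsingleton A) (n : ℕ) : Vt P n A :=
  vh_of_subsingleton P (ModuleCat.of R A) hA n

end TypeLevel

end AcyclicityAux

open AcyclicityAux IsLocalRing

/-- the classical Peskine–Szpiro Acyclicity Lemma: if `depth M_j ≥ j`
for all `j` and `i > 0` is the largest index with `H_i ≠ 0`, then `depth H_i ≥ 1`. -/
theorem stmt10 (R : Type) [CommRing R] [IsNoetherianRing R] [IsLocalRing R] (m : ℕ)
    (M : ℕ → Type) [∀ q, AddCommGroup (M q)] [∀ q, Module R (M q)]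
    [∀ q, Module.Finite R (M q)]
    (d : ∀ q, M (q + 1) →ₗ[R] M q)
    (hcomplex : ∀ q, (d q) ∘ₗ (d (q + 1)) = 0)
    (hbounded : ∀ q, m < q → Subsingleton (M q))
    (hdepth : ∀ j : ℕ, (j : ℕ∞) ≤ depthE R (M j))
    (i : ℕ) (hi : 0 < i)
    (hnontriv : Nontrivial (Hml d (i - 1)))
    (htop : ∀ k, i < k → Subsingleton (Hml d (k - 1))) :
    1 ≤ depthE R (Hml d (i - 1)) := by
  classical
  obtain ⟨P⟩ : Nonempty (ProjectiveResolution (kk R)) :=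
    HasProjectiveResolution.out (Z := kk R)
  -- unpack the depth hypothesis
  have hdepthV : ∀ j n : ℕ, n < j → Vt P n (M j) := by
    intro j n hn
    refine (vh_iff_cext P n (M j)).mp ?_
    by_contra hcon
    rw [not_subsingleton_iff_nontrivial] at hcon
    have h1 : depthE R (M j) ≤ (n : ℕ∞) := sInf_le ⟨n, rfl, hcon⟩
    have h2 : ((n : ℕ∞) : ℕ∞) < (j : ℕ∞) := by exact_mod_cast hn
    exact absurd ((hdepth j).trans h1) (not_le.mpr h2)
  -- the complex condition
  have hrk : ∀ q, LinearMap.range (d (q + 1)) ≤ LinearMap.ker (d q) := by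
    intro q x hx
    obtain ⟨y, rfl⟩ := hx
    have := LinearMap.congr_fun (hcomplex q) y
    simpa using this
  -- the short exact sequence 0 → ker (d q) → M (q+1) → range (d q) → 0
  have SES1 : ∀ q n, Vt P n (M (q + 1)) → Vt P (n + 1) ↥(LinearMap.ker (d q)) →
      Vt P n ↥(LinearMap.range (d q)) := by
    intro q n h2 h1
    refine Vt_X₃ P (LinearMap.ker (d q)).subtype (d q).rangeRestrict
      (Submodule.injective_subtype _) (d q).surjective_rangeRestrict ?_ ?_ n h2 h1
    · rw [Submodule.range_subtype, LinearMap.ker_rangeRestrict]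
    · ext x
      have hx : d q (x : M (q + 1)) = 0 := x.2
      simpa using hx
  -- key downward induction:
  have key : ∀ t q, i ≤ q → m ≤ q + t → ∀ n, n < q + 1 →
      Vt P n ↥(LinearMap.range (d q)) := by
    intro t
    induction t with
    | zero =>
      intro q _ hmq n _
      have hsub : Subsingleton (M (q + 1)) := hbounded _ (by omega)
      refine Vt_of_subsingleton P ⟨?_⟩ n
      rintro ⟨a, x, rfl⟩ ⟨b, y, rfl⟩
      exact Subtype.ext (congrArg (d q) (hsub.elim x y))
    | succ t ih =>
      intro q hiq hmq n hn
      by_cases hmq' : m ≤ q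
      · have hsub : Subsingleton (M (q + 1)) := hbounded _ (by omega)
        refine Vt_of_subsingleton P ⟨?_⟩ n
        rintro ⟨a, x, rfl⟩ ⟨b, y, rfl⟩
        exact Subtype.ext (congrArg (d q) (hsub.elim x y))
      · have h1 := ih (q + 1) (by omega) (by omega)
        have hss : Subsingleton (Hml d q) := by
          have := htop (q + 1) (by omega)
          simpa using this
        have heq : LinearMap.range (d (q + 1)) = LinearMap.ker (d q) :=
          le_antisymm (hrk q) (Submodule.comap_subtype_eq_top.mp
            (Submodule.Quotient.subsingleton_iff.mp hss))
        have e : ↥(LinearMap.range (d (q + 1))) ≃ₗ[R] ↥(LinearMap.ker (d q)) :=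
          LinearEquiv.ofEq _ _ heq
        exact SES1 q n (hdepthV (q + 1) n (by omega))
          (Vt_of_equiv P e (n + 1) (h1 (n + 1) (by omega)))
  -- now conclude
  obtain ⟨q0, rfl⟩ : ∃ q0, i = q0 + 1 := ⟨i - 1, by omega⟩
  simp only [Nat.add_sub_cancel] at hnontriv ⊢
  have V0Z : Vt P 0 ↥(LinearMap.ker (d q0)) :=
    Vt_zero_of_injective P (LinearMap.ker (d q0)).subtype (Submodule.injective_subtype _)
      (hdepthV (q0 + 1) 0 (by omega))
  have VB : ∀ n, n < q0 + 1 + 1 → Vt P n ↥(LinearMap.range (d (q0 + 1))) :=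
    key m (q0 + 1) le_rfl (by omega)
  have V1A : Vt P 1
      ↥(Submodule.comap (LinearMap.ker (d q0)).subtype (LinearMap.range (d (q0 + 1)))) :=
    Vt_of_equiv P (Submodule.comapSubtypeEquivOfLe (hrk q0)).symm 1 (VB 1 (by omega))
  have VH : Vt P 0 (Hml d q0) := by
    refine Vt_X₃ P
      (Submodule.comap (LinearMap.ker (d q0)).subtype (LinearMap.range (d (q0 + 1)))).subtype
      (Submodule.comap (LinearMap.ker (d q0)).subtype (LinearMap.range (d (q0 + 1)))).mkQ
      (Submodule.injective_subtype _) (Submodule.mkQ_surjective _) ?_ ?_ 0 V0Z V1A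
    · rw [Submodule.range_subtype, Submodule.ker_mkQ]
    · ext x
      simpa using (Submodule.Quotient.mk_eq_zero _).mpr x.2
  have hVH : Subsingleton (CExt R 0 (ResidueField R) (Hml d q0)) :=
    (vh_iff_cext P 0 (Hml d q0)).mpr VH
  refine le_sInf ?_
  rintro k ⟨n, rfl, hn⟩
  match n with
  | 0 => exact absurd hn (not_nontrivial_iff_subsingleton.mpr hVH)
  | n + 1 => exact_mod_cast Nat.succ_le_succ (Nat.zero_le n)
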